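/- Fix a nonzero eigenvalue λ_α ∈ σ(−Δ_M), set d_W = dim 𝒲(λ_α) and d_V = dim V_{−Δ_M}(λ_α), and let H_α = {exp(φ) ∈ 𝕋 : α(φ) ∈ 2πℤ}. Then the coefficient of χ_𝕋(𝕋/H_α⁺) in the bifurcation index at λ_α equals BIF_𝕋(λ_α)_{H_α} = (−1)^{(d_W+d_V)n_− + 1} · n_−. -/

import Mathlib

/-!
STATEMENT 15 (Lemma `multinUT` (ii) of the paper).

The Euler ring `U(𝕋)` of the torus `𝕋 = exp(𝔞)` is modelled as the free
ℤ-module `Sub →₀ ℤ` on the closed subgroups of `𝕋`, with multiplication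
`eulerMul`, powers `eulerPow`, unit `𝕀 = Finsupp.single top 1`; the coefficient
of `x` at the generator `χ_𝕋(𝕋/K⁺)` is the `Finsupp` value `x K`.
`Hsub α = H_α = {exp(φ) ∈ 𝕋 : α(φ) ∈ 2πℤ}` is the codimension-one subgroup
attached to the restricted highest weight `α` with `λ_α = lamA ∈ σ(−Δ_M)`.

The eigenspace `V_{−Δ_M}(λ_α)` and `𝒲(λ_α) = ⊕_{λ_β<λ_α} V_{−Δ_M}(λ_β)` are
orthogonal 𝕋-representations with multiplicities `(multV0, multV)` and
`(multW0, multW)` (of `ℝ[1,0]` and of `ℝ[1,μ]`, `μ ∈ ℳ`), so that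
`d_V = multV0 + 2·Σ_μ multV μ` and `d_W = multW0 + 2·Σ_μ multW μ`.
Key inputs (Proposition `first-plane`, Theorem `UTnmult` and Lemma `indices`):
`ℝ[1,α]` occurs with multiplicity `1` in `V_{−Δ_M}(λ_α)` and `0` in `𝒲(λ_α)`;
`degV = χ_𝕋(S^{V_{−Δ_M}(λ_α)})` and `degW = χ_𝕋(S^{𝒲(λ_α)})` have the expansions
of Theorem `UTnmult`; and
`BIF_𝕋(λ_α) = χ_𝕋(S^{𝒲(λ_α)})^{n₋} ⋆ (χ_𝕋(S^{V_{−Δ_M}(λ_α)})^{n₋} − 𝕀)`.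

Conclusion: `BIF_𝕋(λ_α)_{H_α} = (−1)^{(d_W+d_V)n₋ + 1} · n₋`.
-/

/-- The Euler-ring multiplication of a torus on the free ℤ-module on the set of
closed subgroups. -/
noncomputable def eulerMul {Sub : Type*} (dimT : ℕ) (dim : Sub → ℕ)
    (inter : Sub → Sub → Sub) (x y : Sub →₀ ℤ) : Sub →₀ ℤ :=
  x.sum fun H a => y.sum fun K b =>
    if dim H + dim K = dimT + dim (inter H K)
    then Finsupp.single (inter H K) (a * b) else 0

/-- Powers in the Euler ring (`x^0 = 𝕀`). -/
noncomputable def eulerPow {Sub : Type*} (dimT : ℕ) (dim : Sub → ℕ)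
    (inter : Sub → Sub → Sub) (top : Sub) (x : Sub →₀ ℤ) : ℕ → (Sub →₀ ℤ)
  | 0 => Finsupp.single top 1
  | n + 1 => eulerMul dimT dim inter x (eulerPow dimT dim inter top x n)

/-- `lowDim dimT dim y` : `y` is a ℤ-linear combination of generators
`χ_𝕋(𝕋/H⁺)` with `dim H ≤ dim 𝕋 − 2`. -/
def lowDim {Sub : Type*} (dimT : ℕ) (dim : Sub → ℕ) (y : Sub →₀ ℤ) : Prop :=
  ∀ H ∈ y.support, dim H + 2 ≤ dimT

open Classical in
lemma emul_apply {Sub : Type*} (dimT : ℕ) (dim : Sub → ℕ)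
    (inter : Sub → Sub → Sub) (x y : Sub →₀ ℤ) (s : Sub) :
    eulerMul dimT dim inter x y s =
      ∑ H ∈ x.support, ∑ K ∈ y.support,
        if dim H + dim K = dimT + dim (inter H K) ∧ inter H K = s
        then x H * y K else 0 := by
  rw [eulerMul, Finsupp.sum_apply, Finsupp.sum]
  refine Finset.sum_congr rfl fun H _ => ?_
  rw [Finsupp.sum_apply, Finsupp.sum]
  refine Finset.sum_congr rfl fun K _ => ?_
  by_cases h : dim H + dim K = dimT + dim (inter H K)
  · rw [if_pos h, Finsupp.single_apply]
    by_cases h2 : inter H K = s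
    · rw [if_pos h2, if_pos ⟨h, h2⟩]
    · rw [if_neg h2, if_neg (by tauto)]
  · rw [if_neg h, if_neg (by tauto)]
    rfl

open Classical in
lemma sum_if_pair {Sub : Type*} (x y : Sub →₀ ℤ) (a b : Sub) :
    (∑ H ∈ x.support, ∑ K ∈ y.support, if H = a ∧ K = b then x H * y K else 0)
      = x a * y b := by
  have inner : ∀ H, (∑ K ∈ y.support, if H = a ∧ K = b then x H * y K else 0)
      = if H = a then x H * y b else 0 := by
    intro H
    by_cases h : H = a
    · simp only [h, true_and, if_true]
      rw [Finset.sum_ite_eq' y.support b (fun K => x a * y K)]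
      by_cases hb : b ∈ y.support
      · simp [hb]
      · simp [hb, Finsupp.notMem_support_iff.mp hb]
    · simp [h]
  rw [Finset.sum_congr rfl fun H _ => inner H]
  rw [Finset.sum_ite_eq' x.support a (fun H => x H * y b)]
  by_cases ha : a ∈ x.support
  · simp [ha]
  · simp [ha, Finsupp.notMem_support_iff.mp ha]

section
variable {Sub : Type*} (dimT : ℕ) (dim : Sub → ℕ) (inter : Sub → Sub → Sub) (top : Sub)

/-- support elements of full dimension must be `top`. -/
def EGood (x : Sub →₀ ℤ) : Prop := ∀ H, dim H = dimT → H ≠ top → x H = 0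

variable (hdim : ∀ H, dim H ≤ dimT)
    (hinter_left : ∀ H K, dim (inter H K) ≤ dim H)
    (hinter_right : ∀ H K, dim (inter H K) ≤ dim K)
    (hdimtop : dim top = dimT)
    (hinter_top : ∀ H, inter top H = H) (hinter_top' : ∀ H, inter H top = H)

set_option linter.unusedSectionVars false

include hdim hinter_left hinter_right hdimtop hinter_top hinter_top'

open Classical in
lemma coef_top {x y : Sub →₀ ℤ} (hx : EGood dimT dim top x) (hy : EGood dimT dim top y) :
    eulerMul dimT dim inter x y top = x top * y top := by
  rw [emul_apply]
  rw [show (∑ H ∈ x.support, ∑ K ∈ y.support,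
        if dim H + dim K = dimT + dim (inter H K) ∧ inter H K = top
        then x H * y K else 0)
      = ∑ H ∈ x.support, ∑ K ∈ y.support,
        if H = top ∧ K = top then x H * y K else 0 from ?_]
  · exact sum_if_pair x y top top
  refine Finset.sum_congr rfl fun H hH => Finset.sum_congr rfl fun K hK => ?_
  by_cases h : dim H + dim K = dimT + dim (inter H K) ∧ inter H K = top
  · obtain ⟨h1, h2⟩ := h
    have hdi : dim (inter H K) = dimT := by rw [h2, hdimtop]
    have hH1 : dim H = dimT := le_antisymm (hdim H) (by
      have := hinter_left H K; have := hdim K; omega)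
    have hK1 : dim K = dimT := by have := hinter_right H K; have := hdim H; omega
    have hHtop : H = top := by
      by_contra hc; exact (Finsupp.mem_support_iff.mp hH) (hx H hH1 hc)
    have hKtop : K = top := by
      by_contra hc; exact (Finsupp.mem_support_iff.mp hK) (hy K hK1 hc)
    rw [if_pos ⟨h1, h2⟩, if_pos ⟨hHtop, hKtop⟩]
  · rw [if_neg h, if_neg ?_]
    rintro ⟨ht, hk⟩
    exact h ⟨by rw [ht, hk, hinter_top, hdimtop], by rw [ht, hk, hinter_top]⟩

open Classical in
lemma coef_codim1 {x y : Sub →₀ ℤ} (hx : EGood dimT dim top x) (hy : EGood dimT dim top y)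
    (s : Sub) (hs : dim s + 1 = dimT) :
    eulerMul dimT dim inter x y s = x top * y s + x s * y top := by
  have hstop : s ≠ top := fun h => by rw [h, hdimtop] at hs; omega
  rw [emul_apply]
  rw [show (∑ H ∈ x.support, ∑ K ∈ y.support,
        if dim H + dim K = dimT + dim (inter H K) ∧ inter H K = s
        then x H * y K else 0)
      = ∑ H ∈ x.support, ∑ K ∈ y.support,
        ((if H = top ∧ K = s then x H * y K else 0)
          + (if H = s ∧ K = top then x H * y K else 0)) from ?_]
  · rw [Finset.sum_congr rfl fun H _ => Finset.sum_add_distrib,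
      Finset.sum_add_distrib, sum_if_pair, sum_if_pair]
  refine Finset.sum_congr rfl fun H hH => Finset.sum_congr rfl fun K hK => ?_
  by_cases h : dim H + dim K = dimT + dim (inter H K) ∧ inter H K = s
  · obtain ⟨h1, h2⟩ := h
    have hdi : dim (inter H K) + 1 = dimT := by rw [h2]; exact hs
    have hHK : dim H = dimT ∨ dim K = dimT := by
      have := hdim H; have := hdim K; have := hinter_left H K; omega
    rcases hHK with hH1 | hK1
    · have hHtop : H = top := by
        by_contra hc; exact (Finsupp.mem_support_iff.mp hH) (hx H hH1 hc)
      have hKs : K = s := by rw [hHtop, hinter_top] at h2; exact h2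
      have hne : ¬ (H = s ∧ K = top) := by
        rintro ⟨h3, -⟩; exact hstop (h3.symm.trans hHtop)
      rw [if_pos ⟨h1, h2⟩, if_pos ⟨hHtop, hKs⟩, if_neg hne]
      ring
    · have hKtop : K = top := by
        by_contra hc; exact (Finsupp.mem_support_iff.mp hK) (hy K hK1 hc)
      have hHs : H = s := by rw [hKtop, hinter_top'] at h2; exact h2
      have hne : ¬ (H = top ∧ K = s) := by
        rintro ⟨h3, -⟩; exact hstop (hHs.symm.trans h3)
      rw [if_pos ⟨h1, h2⟩, if_neg hne, if_pos ⟨hHs, hKtop⟩]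
      ring
  · rw [if_neg h]
    rw [if_neg ?_, if_neg ?_]
    · ring
    · rintro ⟨ht, hk⟩
      exact h ⟨by rw [ht, hk, hinter_top', hdimtop]; omega, by rw [ht, hk, hinter_top']⟩
    · rintro ⟨ht, hk⟩
      exact h ⟨by rw [ht, hk, hinter_top, hdimtop], by rw [ht, hk, hinter_top]⟩

open Classical in
lemma emul_good {x y : Sub →₀ ℤ} (hx : EGood dimT dim top x) (hy : EGood dimT dim top y) :
    EGood dimT dim top (eulerMul dimT dim inter x y) := by
  intro H' hH' hne
  rw [emul_apply]
  refine Finset.sum_eq_zero fun H hH => Finset.sum_eq_zero fun K hK => ?_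
  rw [if_neg ?_]
  rintro ⟨h1, h2⟩
  have hdi : dim (inter H K) = dimT := by rw [h2, hH']
  have hH1 : dim H = dimT := by
    have := hdim H; have := hdim K; have := hinter_left H K; omega
  have hK1 : dim K = dimT := by
    have := hdim H; have := hinter_right H K; omega
  have hHtop : H = top := by
    by_contra hc; exact (Finsupp.mem_support_iff.mp hH) (hx H hH1 hc)
  have hKtop : K = top := by
    by_contra hc; exact (Finsupp.mem_support_iff.mp hK) (hy K hK1 hc)
  exact hne (by rw [← h2, hHtop, hKtop, hinter_top])

end


section
variable {Sub : Type*} (dimT : ℕ) (dim : Sub → ℕ) (inter : Sub → Sub → Sub) (top : Sub)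
variable (hdim : ∀ H, dim H ≤ dimT)
    (hinter_left : ∀ H K, dim (inter H K) ≤ dim H)
    (hinter_right : ∀ H K, dim (inter H K) ≤ dim K)
    (hdimtop : dim top = dimT)
    (hinter_top : ∀ H, inter top H = H) (hinter_top' : ∀ H, inter H top = H)

set_option linter.unusedSectionVars false
include hdim hinter_left hinter_right hdimtop hinter_top hinter_top'

lemma one_good : EGood dimT dim top (Finsupp.single top 1 : Sub →₀ ℤ) := by
  intro H _ hne
  exact Finsupp.single_eq_of_ne' (Ne.symm hne)

lemma pow_good {x : Sub →₀ ℤ} (hx : EGood dimT dim top x) (n : ℕ) :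
    EGood dimT dim top (eulerPow dimT dim inter top x n) := by
  induction n with
  | zero => exact one_good dimT dim inter top hdim hinter_left hinter_right hdimtop hinter_top hinter_top'
  | succ n ih => exact emul_good dimT dim inter top hdim hinter_left hinter_right hdimtop hinter_top hinter_top' hx ih

lemma pow_top {x : Sub →₀ ℤ} (hx : EGood dimT dim top x) (n : ℕ) :
    eulerPow dimT dim inter top x n top = (x top) ^ n := by
  induction n with
  | zero => simp [eulerPow]
  | succ n ih =>
      rw [eulerPow, coef_top dimT dim inter top hdim hinter_left hinter_right hdimtop
        hinter_top hinter_top' hx (pow_good dimT dim inter top hdim hinter_left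
          hinter_right hdimtop hinter_top hinter_top' hx n), ih, pow_succ]
      ring

lemma pow_codim1 {x : Sub →₀ ℤ} (hx : EGood dimT dim top x)
    (s : Sub) (hs : dim s + 1 = dimT) (n : ℕ) :
    eulerPow dimT dim inter top x n s = n * (x top) ^ (n - 1) * x s := by
  have hstop : s ≠ top := fun h => by rw [h, hdimtop] at hs; omega
  induction n with
  | zero => simp [eulerPow, Finsupp.single_eq_of_ne' (Ne.symm hstop)]
  | succ n ih =>
      rw [eulerPow, coef_codim1 dimT dim inter top hdim hinter_left hinter_right hdimtop
        hinter_top hinter_top' hx (pow_good dimT dim inter top hdim hinter_left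
          hinter_right hdimtop hinter_top hinter_top' hx n) s hs, ih,
        pow_top dimT dim inter top hdim hinter_left hinter_right hdimtop
          hinter_top hinter_top' hx n]
      cases n with
      | zero => simp
      | succ m =>
          simp only [Nat.add_sub_cancel]
          push_cast
          ring
  end


theorem statement15
    -- the closed subgroups of the torus 𝕋, their dimensions and intersections
    (Sub : Type*) (dimT : ℕ) (dim : Sub → ℕ) (hdim : ∀ H, dim H ≤ dimT)
    (inter : Sub → Sub → Sub)
    (hinter_left : ∀ H K, dim (inter H K) ≤ dim H)
    (hinter_right : ∀ H K, dim (inter H K) ≤ dim K)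
    (top : Sub) (hdimtop : dim top = dimT)
    (hinter_top : ∀ H, inter top H = H) (hinter_top' : ∀ H, inter H top = H)
    -- ℳ: the chosen set of nonzero restricted weights and μ ↦ H_μ
    (Mw : Type*) (Hsub : Mw → Sub)
    (hHsub : ∀ ν, dim (Hsub ν) + 1 = dimT)
    (hHsubInj : Function.Injective Hsub)
    -- the coefficients a_i ∈ {−1,1} of the system; n₋ = #{i : a_i = −1}
    (p : ℕ) (hp : 0 < p) (a : Fin p → ℝ) (ha : ∀ i, a i = 1 ∨ a i = -1)
    -- a fixed nonzero eigenvalue λ_α of −Δ_M with restricted highest weight α ∈ ℳ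
    (spec : Set ℝ) (lamA : ℝ) (hlamA : lamA ∈ spec) (hlamA0 : lamA ≠ 0)
    (alpha : Mw)
    -- multiplicities of ℝ[1,0] and ℝ[1,μ] in V_{−Δ_M}(λ_α) and 𝒲(λ_α)
    (multV0 : ℕ) (multV : Mw →₀ ℕ) (multW0 : ℕ) (multW : Mw →₀ ℕ)
    -- ℝ[1,α] occurs with multiplicity 1 in V_{−Δ_M}(λ_α) and 0 in 𝒲(λ_α)
    (hmultV : multV alpha = 1) (hmultW : multW alpha = 0)
    -- degV = χ_𝕋(S^{V_{−Δ_M}(λ_α)}), degW = χ_𝕋(S^{𝒲(λ_α)}), with their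
    -- expansions from Theorem UTnmult
    (degV degW : Sub →₀ ℤ)
    (hdegV : ∃ O : Sub →₀ ℤ, lowDim dimT dim O ∧
      degV = (-1 : ℤ) ^ multV0 • (Finsupp.single top 1
        - multV.sum fun ν n => (n : ℤ) • Finsupp.single (Hsub ν) 1) + O)
    (hdegW : ∃ O : Sub →₀ ℤ, lowDim dimT dim O ∧
      degW = (-1 : ℤ) ^ multW0 • (Finsupp.single top 1
        - multW.sum fun ν n => (n : ℤ) • Finsupp.single (Hsub ν) 1) + O)
    -- the bifurcation index and its product formula (Lemma `indices` (1))
    (BIF : ℝ → (Sub →₀ ℤ))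
    (hBIFeq : BIF lamA =
      eulerMul dimT dim inter
        (eulerPow dimT dim inter top degW (Finset.univ.filter fun i => a i = -1).card)
        (eulerPow dimT dim inter top degV (Finset.univ.filter fun i => a i = -1).card
          - Finsupp.single top 1)) :
    -- BIF_𝕋(λ_α)_{H_α} = (−1)^{(d_W + d_V) n₋ + 1} n₋
    (BIF lamA) (Hsub alpha)
      = (-1 : ℤ) ^
          (((multW0 + 2 * multW.sum fun _ n => n) + (multV0 + 2 * multV.sum fun _ n => n))
              * (Finset.univ.filter fun i => a i = -1).card + 1)
        * ((Finset.univ.filter fun i => a i = -1).card : ℤ) := by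
  classical
  obtain ⟨OV, hOV, hV⟩ := hdegV
  obtain ⟨OW, hOW, hW⟩ := hdegW
  have hα := hHsub alpha
  have hαtop : Hsub alpha ≠ top := fun h => by rw [h, hdimtop] at hα; omega
  -- evaluation of the weight sums
  have hSat : ∀ (mult : Mw →₀ ℕ),
      (mult.sum fun ν m => (m : ℤ) • Finsupp.single (Hsub ν) (1:ℤ)) (Hsub alpha)
        = (mult alpha : ℤ) := by
    intro mult
    rw [Finsupp.sum_apply, Finsupp.sum]
    simp only [Finsupp.smul_apply, Finsupp.single_apply, hHsubInj.eq_iff, smul_eq_mul,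
      mul_ite, mul_one, mul_zero]
    rw [Finset.sum_ite_eq' mult.support alpha (fun ν => (mult ν : ℤ))]
    by_cases h : alpha ∈ mult.support
    · simp [h]
    · simp [h, Finsupp.notMem_support_iff.mp h]
  have hS0 : ∀ (mult : Mw →₀ ℕ) (H : Sub), dim H = dimT →
      (mult.sum fun ν m => (m : ℤ) • Finsupp.single (Hsub ν) (1:ℤ)) H = 0 := by
    intro mult H hH
    rw [Finsupp.sum_apply, Finsupp.sum]
    refine Finset.sum_eq_zero fun ν _ => ?_
    have hne : Hsub ν ≠ H := fun h => by have := hHsub ν; rw [h, hH] at this; omega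
    simp [Finsupp.single_apply, hne]
  have hlowzero : ∀ (O : Sub →₀ ℤ), lowDim dimT dim O → ∀ H, dimT ≤ dim H + 1 → O H = 0 := by
    intro O hO H hH
    by_contra hc
    have := hO H (Finsupp.mem_support_iff.mpr hc)
    omega
  -- values of degV and degW at top and at H_α
  have hdegVtop : degV top = (-1:ℤ)^multV0 := by
    rw [hV, Finsupp.add_apply, Finsupp.smul_apply, Finsupp.sub_apply,
      Finsupp.single_eq_same, hS0 multV top hdimtop,
      hlowzero OV hOV top (by omega)]
    simp
  have hdegWtop : degW top = (-1:ℤ)^multW0 := by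
    rw [hW, Finsupp.add_apply, Finsupp.smul_apply, Finsupp.sub_apply,
      Finsupp.single_eq_same, hS0 multW top hdimtop,
      hlowzero OW hOW top (by omega)]
    simp
  have hdegVα : degV (Hsub alpha) = -(-1:ℤ)^multV0 := by
    rw [hV, Finsupp.add_apply, Finsupp.smul_apply, Finsupp.sub_apply,
      Finsupp.single_eq_of_ne' (Ne.symm hαtop), hSat multV, hmultV,
      hlowzero OV hOV (Hsub alpha) (by omega)]
    simp
  have hdegWα : degW (Hsub alpha) = 0 := by
    rw [hW, Finsupp.add_apply, Finsupp.smul_apply, Finsupp.sub_apply,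
      Finsupp.single_eq_of_ne' (Ne.symm hαtop), hSat multW, hmultW,
      hlowzero OW hOW (Hsub alpha) (by omega)]
    simp
  -- goodness
  have hGoodV : EGood dimT dim top degV := by
    intro H hH hne
    rw [hV, Finsupp.add_apply, Finsupp.smul_apply, Finsupp.sub_apply,
      Finsupp.single_eq_of_ne' (Ne.symm hne), hS0 multV H hH,
      hlowzero OV hOV H (by omega)]
    simp
  have hGoodW : EGood dimT dim top degW := by
    intro H hH hne
    rw [hW, Finsupp.add_apply, Finsupp.smul_apply, Finsupp.sub_apply,
      Finsupp.single_eq_of_ne' (Ne.symm hne), hS0 multW H hH,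
      hlowzero OW hOW H (by omega)]
    simp
  have GW := pow_good dimT dim inter top hdim hinter_left hinter_right hdimtop
    hinter_top hinter_top' hGoodW ((Finset.univ.filter fun i => a i = -1).card)
  have GQ : EGood dimT dim top
      (eulerPow dimT dim inter top degV ((Finset.univ.filter fun i => a i = -1).card)
        - Finsupp.single top 1) := by
    intro H hH hne
    rw [Finsupp.sub_apply,
      pow_good dimT dim inter top hdim hinter_left hinter_right hdimtop
        hinter_top hinter_top' hGoodV _ H hH hne,
      one_good dimT dim inter top hdim hinter_left hinter_right hdimtop
        hinter_top hinter_top' H hH hne, sub_zero]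
  rw [hBIFeq,
    coef_codim1 dimT dim inter top hdim hinter_left hinter_right hdimtop
      hinter_top hinter_top' GW GQ (Hsub alpha) hα,
    Finsupp.sub_apply, Finsupp.sub_apply,
    pow_top dimT dim inter top hdim hinter_left hinter_right hdimtop
      hinter_top hinter_top' hGoodW,
    pow_codim1 dimT dim inter top hdim hinter_left hinter_right hdimtop
      hinter_top hinter_top' hGoodW (Hsub alpha) hα,
    pow_top dimT dim inter top hdim hinter_left hinter_right hdimtop
      hinter_top hinter_top' hGoodV,
    pow_codim1 dimT dim inter top hdim hinter_left hinter_right hdimtop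
      hinter_top hinter_top' hGoodV (Hsub alpha) hα,
    hdegVtop, hdegVα, hdegWtop, hdegWα,
    Finsupp.single_eq_of_ne' (Ne.symm hαtop), Finsupp.single_eq_same]
  generalize (Finset.univ.filter fun i => a i = -1).card = n
  rcases n with _ | m
  · norm_num
  · simp only [Nat.add_sub_cancel, mul_zero, zero_mul, sub_zero, add_zero]
    have e1 : ((-1:ℤ)^multW0)^(m+1) = (-1:ℤ)^(multW0*(m+1)) := (pow_mul _ _ _).symm
    have e2 : ((-1:ℤ)^multV0)^m = (-1:ℤ)^(multV0*m) := (pow_mul _ _ _).symm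
    rw [e1, e2,
      show ((multW0 + 2 * multW.sum fun _ k => k) + (multV0 + 2 * multV.sum fun _ k => k))
            * (m+1) + 1
          = multW0*(m+1) + multV0*m + multV0 + 1
            + 2*(((multW.sum fun _ k => k) + (multV.sum fun _ k => k))*(m+1)) from by ring,
      pow_add, pow_add, pow_add, pow_add, pow_mul]
    push_cast
    ring_nf
    simp only [pow_mul', neg_one_sq, one_pow, mul_one]
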